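/- Let n ≥ 1, let 𝒴 = {1, ..., K} with K ≥ 1, and let (X_i, Y_i), i = 1, ..., 2n+1, be random variables with values in 𝒳 × 𝒴 whose joint distribution is exchangeable. Fix a measurable score function s : 𝒳 × 𝒴 → ℝ. For y ∈ 𝒴 let I_y = {i ∈ {n+1,...,2n} : Y_i = y}, n_y = |I_y|, and define p(X_{2n+1}|y) = (Σ_{i ∈ I_y} 1{s(X_i, y) ≤ s(X_{2n+1}, y)} + 1)/(n_y + 1). Fix α ∈ (0,1) and set y_min = min{y ∈ 𝒴 : p(X_{2n+1}|y) > α}, y_max = max{y ∈ 𝒴 : p(X_{2n+1}|y) > α}, and define the prediction interval C(X_{2n+1}) = {y_min, y_min + 1, ..., y_max} (Algorithm 1 with conditional conformal p-values; C(X_{2n+1}) = ∅ when {y : p(X_{2n+1}|y) > α} is empty). Then for every y ∈ 𝒴 with P(Y_{2n+1} = y) > 0, P(Y_{2n+1} ∈ C(X_{2n+1}) | Y_{2n+1} = y) ≥ 1 − α. -/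

import Mathlib

open MeasureTheory ProbabilityTheory
open scoped ENNReal

lemma rank_lemma {ι : Type*} (S : Finset ι) (f : ι → ℝ) (t : ℝ) (ht : 0 ≤ t)
    [DecidablePred fun i => ((S.filter (fun j => f j ≤ f i)).card : ℝ) ≤ t] :
    ((S.filter (fun i => ((S.filter (fun j => f j ≤ f i)).card : ℝ) ≤ t)).card : ℝ) ≤ t := by
  set C := S.filter (fun i => ((S.filter (fun j => f j ≤ f i)).card : ℝ) ≤ t) with hC
  rcases C.eq_empty_or_nonempty with h | h
  · simp [h, ht]
  · obtain ⟨i, hiC, hmax⟩ := C.exists_max_image f h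
    have hsub : C ⊆ S.filter (fun j => f j ≤ f i) := by
      intro j hj
      rw [Finset.mem_filter]
      exact ⟨(Finset.mem_filter.1 hj).1, hmax j hj⟩
    have h1 : (C.card : ℝ) ≤ ((S.filter (fun j => f j ≤ f i)).card : ℝ) := by
      exact_mod_cast Finset.card_le_card hsub
    exact h1.trans (Finset.mem_filter.1 hiC).2

lemma measurable_filter_card {α ι : Type*} [MeasurableSpace α] (F : Finset ι)
    (q : ι → α → Prop) [∀ j, DecidablePred (q j)]
    (hq : ∀ j, MeasurableSet {x | q j x}) :
    Measurable (fun x => ((F.filter (fun j => q j x)).card : ℝ)) := by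
  have h : (fun x => ((F.filter (fun j => q j x)).card : ℝ))
      = fun x => ∑ j ∈ F, if q j x then (1:ℝ) else 0 := by
    funext x
    rw [Finset.card_filter]
    push_cast
    rfl
  rw [h]
  exact Finset.measurable_sum _ (fun j _ => Measurable.ite (hq j) measurable_const measurable_const)

lemma swap_filter_card {ι : Type*} [DecidableEq ι] (T : Finset ι) (i N : ι)
    (hi : i ∈ T) (hN : N ∈ T) (Q : ι → Prop) [DecidablePred Q] :
    ((T.erase N).filter (fun j => Q (Equiv.swap i N j))).card
      = ((T.erase i).filter Q).card := by
  by_cases h : i = N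
  · subst h; simp [Equiv.swap_self]
  · apply Finset.card_bij (fun j _ => Equiv.swap i N j)
    · intro a ha
      obtain ⟨haT, hQ⟩ := Finset.mem_filter.1 ha
      obtain ⟨haN, haT'⟩ := Finset.mem_erase.1 haT
      rw [Finset.mem_filter, Finset.mem_erase]
      refine ⟨⟨?_, ?_⟩, hQ⟩
      · rcases eq_or_ne a i with rfl | hai
        · rw [Equiv.swap_apply_left]; exact Ne.symm h
        · rw [Equiv.swap_apply_of_ne_of_ne hai haN]; exact hai
      · rcases eq_or_ne a i with rfl | hai
        · rw [Equiv.swap_apply_left]; exact hN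
        · rw [Equiv.swap_apply_of_ne_of_ne hai haN]; exact haT'
    · intro a ha b hb hab
      exact (Equiv.swap i N).injective hab
    · intro b hb
      obtain ⟨hbT, hQ⟩ := Finset.mem_filter.1 hb
      obtain ⟨hbi, hbT'⟩ := Finset.mem_erase.1 hbT
      refine ⟨Equiv.swap i N b, ?_, ?_⟩
      · rw [Finset.mem_filter, Finset.mem_erase]
        have hs : Equiv.swap i N (Equiv.swap i N b) = b := Equiv.swap_apply_self i N b
        refine ⟨⟨?_, ?_⟩, by rw [hs]; exact hQ⟩
        · rcases eq_or_ne b N with rfl | hbN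
          · rw [Equiv.swap_apply_right]; exact h
          · rw [Equiv.swap_apply_of_ne_of_ne hbi hbN]; exact hbN
        · rcases eq_or_ne b N with rfl | hbN
          · rw [Equiv.swap_apply_right]; exact hi
          · rw [Equiv.swap_apply_of_ne_of_ne hbi hbN]; exact hbT'
      · exact Equiv.swap_apply_self i N b

/-- Theorem 2, Algorithm 1: class-specific conditional coverage of the
ordinal prediction interval based on conditional conformal p-values. With
`A(ω) = {y : p(X_{2n+1}|y) > α}`, the prediction interval is
`C(X_{2n+1}) = {y_min, ..., y_max}` with `y_min = min A(ω)`, `y_max = max A(ω)` (empty when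
`A(ω)` is empty); then for every label `y` with `P(Y_{2n+1} = y) > 0`,
`P(Y_{2n+1} ∈ C(X_{2n+1}) | Y_{2n+1} = y) ≥ 1 − α`. -/
theorem conditional_prediction_interval_conditional_coverage
    {Ω : Type*} [MeasurableSpace Ω] (P : Measure Ω) [IsProbabilityMeasure P]
    {𝒳 : Type*} [MeasurableSpace 𝒳]
    (n K : ℕ) (hn : 1 ≤ n) (hK : 1 ≤ K)
    (Z : Fin (2 * n + 1) → Ω → 𝒳 × Fin K)
    (hmeas : ∀ i, Measurable (Z i))
    (hexch : ∀ σ : Equiv.Perm (Fin (2 * n + 1)),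
      Measure.map (fun ω i => Z (σ i) ω) P = Measure.map (fun ω i => Z i ω) P)
    (s : 𝒳 × Fin K → ℝ) (hs : Measurable s)
    (Dcal : Finset (Fin (2 * n + 1)))
    (hDcal : Dcal = Finset.univ.filter
      (fun i : Fin (2 * n + 1) => n ≤ (i : ℕ) ∧ (i : ℕ) < 2 * n))
    (Iy : Fin K → Ω → Finset (Fin (2 * n + 1)))
    (hIy : ∀ y ω, Iy y ω = Dcal.filter (fun i => (Z i ω).2 = y))
    (p : Fin K → Ω → ℝ)
    (hp : ∀ y ω, p y ω =
      ((((Iy y ω).filter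
          (fun i => s ((Z i ω).1, y) ≤ s ((Z (Fin.last (2 * n)) ω).1, y))).card : ℝ) + 1)
        / (((Iy y ω).card : ℝ) + 1))
    (α : ℝ) (hα : α ∈ Set.Ioo (0 : ℝ) 1)
    (A : Ω → Finset (Fin K))
    (hA : ∀ ω, A ω = Finset.univ.filter (fun y => α < p y ω))
    (y : Fin K) (hpos : 0 < P {ω | (Z (Fin.last (2 * n)) ω).2 = y}) :
    ENNReal.ofReal (1 - α) ≤
      P[|{ω | (Z (Fin.last (2 * n)) ω).2 = y}]
        {ω | ∃ h : (A ω).Nonempty,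
          (Z (Fin.last (2 * n)) ω).2 ∈ Finset.Icc ((A ω).min' h) ((A ω).max' h)} := by
  classical
  obtain ⟨hα0, hα1⟩ := hα
  set N : Fin (2 * n + 1) := Fin.last (2 * n) with hN
  set T : Finset (Fin (2 * n + 1)) := insert N Dcal with hT
  have hNT : N ∈ T := Finset.mem_insert_self _ _
  have hNDcal : N ∉ Dcal := by
    simp [hDcal, hN]
  have hTN : T.erase N = Dcal := Finset.erase_insert hNDcal
  set V : Ω → (Fin (2 * n + 1) → 𝒳 × Fin K) := fun ω j => Z j ω with hV
  have hVmeas : Measurable V := measurable_pi_lambda _ (fun j => hmeas j)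
  set bad : Fin (2 * n + 1) → Set (Fin (2 * n + 1) → 𝒳 × Fin K) := fun i =>
    {v | (v i).2 = y ∧
      ((((T.erase i).filter
          (fun j => (v j).2 = y ∧ s ((v j).1, y) ≤ s ((v i).1, y))).card : ℝ) + 1)
        ≤ α * ((((T.erase i).filter (fun j => (v j).2 = y)).card : ℝ) + 1)} with hbad
  have hbadMeas : ∀ i, MeasurableSet (bad i) := by
    intro i
    have h1 : MeasurableSet {v : Fin (2 * n + 1) → 𝒳 × Fin K | (v i).2 = y} :=
      (measurable_pi_apply i).snd (measurableSet_singleton y)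
    have hc1 : Measurable (fun v : Fin (2 * n + 1) → 𝒳 × Fin K =>
        (((T.erase i).filter
          (fun j => (v j).2 = y ∧ s ((v j).1, y) ≤ s ((v i).1, y))).card : ℝ)) := by
      apply measurable_filter_card
      intro j
      have hA' : MeasurableSet {v : Fin (2 * n + 1) → 𝒳 × Fin K | (v j).2 = y} :=
        (measurable_pi_apply j).snd (measurableSet_singleton y)
      have hB' : MeasurableSet {v : Fin (2 * n + 1) → 𝒳 × Fin K |
          s ((v j).1, y) ≤ s ((v i).1, y)} :=
        measurableSet_le (hs.comp ((measurable_pi_apply j).fst.prodMk measurable_const))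
          (hs.comp ((measurable_pi_apply i).fst.prodMk measurable_const))
      exact hA'.inter hB'
    have hc2 : Measurable (fun v : Fin (2 * n + 1) → 𝒳 × Fin K =>
        (((T.erase i).filter (fun j => (v j).2 = y)).card : ℝ)) := by
      apply measurable_filter_card
      intro j
      exact (measurable_pi_apply j).snd (measurableSet_singleton y)
    have h2 : MeasurableSet {v : Fin (2 * n + 1) → 𝒳 × Fin K |
        (((T.erase i).filter
          (fun j => (v j).2 = y ∧ s ((v j).1, y) ≤ s ((v i).1, y))).card : ℝ) + 1
          ≤ α * ((((T.erase i).filter (fun j => (v j).2 = y)).card : ℝ) + 1)} :=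
      measurableSet_le (hc1.add_const 1)
        (measurable_const.mul (hc2.add_const 1))
    rw [hbad]
    exact h1.inter h2
  set B : Set Ω := {ω | (Z N ω).2 = y} with hB
  have hBmeas : MeasurableSet B := (hmeas N).snd (measurableSet_singleton y)
  -- characterization of bad N
  have hEchar : V ⁻¹' bad N = {ω | (Z N ω).2 = y ∧ p y ω ≤ α} := by
    ext ω
    have hd : (0:ℝ) < ((Iy y ω).card : ℝ) + 1 := by exact_mod_cast (Iy y ω).card.succ_pos
    have key : p y ω ≤ α ↔
        ((((T.erase N).filter
            (fun j => (Z j ω).2 = y ∧ s ((Z j ω).1, y) ≤ s ((Z N ω).1, y))).card : ℝ) + 1)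
          ≤ α * ((((T.erase N).filter (fun j => (Z j ω).2 = y)).card : ℝ) + 1) := by
      rw [hp y ω, div_le_iff₀ hd, hTN, hIy y ω, Finset.filter_filter]
    simp only [Set.mem_preimage, hbad, Set.mem_setOf_eq, hV]
    exact and_congr Iff.rfl key.symm
  -- swap invariance
  have swap_eq : ∀ (i : Fin (2 * n + 1)) (S : Set (Fin (2 * n + 1) → 𝒳 × Fin K)),
      MeasurableSet S →
      P ((fun ω => fun j => Z (Equiv.swap i N j) ω) ⁻¹' S) = P (V ⁻¹' S) := by
    intro i S hS
    have hmf : Measurable (fun ω => fun j => Z (Equiv.swap i N j) ω) :=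
      measurable_pi_lambda _ (fun j => hmeas _)
    rw [← Measure.map_apply hmf hS, ← Measure.map_apply hVmeas hS, hexch (Equiv.swap i N)]
  have hE_eq : ∀ i ∈ T, P (V ⁻¹' bad i) = P (V ⁻¹' bad N) := by
    intro i hi
    rw [← swap_eq i (bad N) (hbadMeas N)]
    congr 1
    ext ω
    have e1 : ((T.erase N).filter (fun j => (Z (Equiv.swap i N j) ω).2 = y ∧
          s ((Z (Equiv.swap i N j) ω).1, y) ≤ s ((Z i ω).1, y))).card
        = ((T.erase i).filter (fun j => (Z j ω).2 = y ∧
          s ((Z j ω).1, y) ≤ s ((Z i ω).1, y))).card :=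
      swap_filter_card T i N hi hNT
        (fun k => (Z k ω).2 = y ∧ s ((Z k ω).1, y) ≤ s ((Z i ω).1, y))
    have e2 : ((T.erase N).filter (fun j => (Z (Equiv.swap i N j) ω).2 = y)).card
        = ((T.erase i).filter (fun j => (Z j ω).2 = y)).card :=
      swap_filter_card T i N hi hNT (fun k => (Z k ω).2 = y)
    simp only [Set.mem_preimage, hbad, Set.mem_setOf_eq, hV, Equiv.swap_apply_right]
    rw [e1, e2]
  have hB_eq : ∀ i ∈ T, P {ω | (Z i ω).2 = y} = P B := by
    intro i hi
    have hmS : MeasurableSet {v : Fin (2 * n + 1) → 𝒳 × Fin K | (v N).2 = y} :=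
      (measurable_pi_apply N).snd (measurableSet_singleton y)
    have hpre : V ⁻¹' {v : Fin (2 * n + 1) → 𝒳 × Fin K | (v N).2 = y} = B := by
      rw [hB]; ext ω; simp [hV]
    have hpre2 : (fun ω => fun j => Z (Equiv.swap i N j) ω) ⁻¹'
        {v : Fin (2 * n + 1) → 𝒳 × Fin K | (v N).2 = y} = {ω | (Z i ω).2 = y} := by
      ext ω
      simp [Equiv.swap_apply_right]
    rw [← hpre, ← swap_eq i _ hmS, hpre2]
  -- pointwise counting bound
  have hpoint : ∀ ω, ((T.filter (fun i => V ω ∈ bad i)).card : ℝ)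
      ≤ α * ((T.filter (fun i => (Z i ω).2 = y)).card : ℝ) := by
    intro ω
    have ht : 0 ≤ α * ((T.filter (fun j => (Z j ω).2 = y)).card : ℝ) := mul_nonneg hα0.le (Nat.cast_nonneg _)
    have hrank := rank_lemma (T.filter (fun j => (Z j ω).2 = y))
      (fun j => s ((Z j ω).1, y)) (α * ((T.filter (fun j => (Z j ω).2 = y)).card : ℝ)) ht
    have hAeq : T.filter (fun i => V ω ∈ bad i)
        = (T.filter (fun j => (Z j ω).2 = y)).filter (fun i =>
            ((((T.filter (fun j => (Z j ω).2 = y)).filter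
              (fun j => s ((Z j ω).1, y) ≤ s ((Z i ω).1, y))).card : ℝ))
              ≤ α * ((T.filter (fun j => (Z j ω).2 = y)).card : ℝ)) := by
      ext i
      simp only [Finset.mem_filter, hbad, Set.mem_setOf_eq, hV]
      constructor
      · rintro ⟨hiT, hYi, hcond⟩
        have e1 : ((T.erase i).filter (fun j => (Z j ω).2 = y ∧
              s ((Z j ω).1, y) ≤ s ((Z i ω).1, y))).card + 1
            = ((T.filter (fun j => (Z j ω).2 = y)).filter
              (fun j => s ((Z j ω).1, y) ≤ s ((Z i ω).1, y))).card := by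
          rw [Finset.filter_filter, Finset.filter_erase]
          exact Finset.card_erase_add_one (Finset.mem_filter.2 ⟨hiT, hYi, le_refl _⟩)
        have e2 : ((T.erase i).filter (fun j => (Z j ω).2 = y)).card + 1
            = (T.filter (fun j => (Z j ω).2 = y)).card := by
          rw [Finset.filter_erase]
          exact Finset.card_erase_add_one (Finset.mem_filter.2 ⟨hiT, hYi⟩)
        refine ⟨⟨hiT, hYi⟩, ?_⟩
        rw [← e1, ← e2]
        push_cast
        exact hcond
      · rintro ⟨⟨hiT, hYi⟩, hcond⟩
        have e1 : ((T.erase i).filter (fun j => (Z j ω).2 = y ∧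
              s ((Z j ω).1, y) ≤ s ((Z i ω).1, y))).card + 1
            = ((T.filter (fun j => (Z j ω).2 = y)).filter
              (fun j => s ((Z j ω).1, y) ≤ s ((Z i ω).1, y))).card := by
          rw [Finset.filter_filter, Finset.filter_erase]
          exact Finset.card_erase_add_one (Finset.mem_filter.2 ⟨hiT, hYi, le_refl _⟩)
        have e2 : ((T.erase i).filter (fun j => (Z j ω).2 = y)).card + 1
            = (T.filter (fun j => (Z j ω).2 = y)).card := by
          rw [Finset.filter_erase]
          exact Finset.card_erase_add_one (Finset.mem_filter.2 ⟨hiT, hYi⟩)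
        refine ⟨hiT, hYi, ?_⟩
        rw [← e1, ← e2] at hcond
        push_cast at hcond
        exact hcond
    rw [hAeq]
    exact hrank
  -- summing / integration
  have hsum : (T.card : ℝ≥0∞) * P (V ⁻¹' bad N)
      ≤ ENNReal.ofReal α * ((T.card : ℝ≥0∞) * P B) := by
    have hmeasE : ∀ i, MeasurableSet (V ⁻¹' bad i) := fun i => hVmeas (hbadMeas i)
    have hmeasBi : ∀ i : Fin (2 * n + 1), MeasurableSet {ω | (Z i ω).2 = y} :=
      fun i => (hmeas i).snd (measurableSet_singleton y)
    have lhs_eq : ∑ i ∈ T, P (V ⁻¹' bad i)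
        = ∫⁻ ω, ∑ i ∈ T, (V ⁻¹' bad i).indicator 1 ω ∂P := by
      rw [lintegral_finset_sum _ (fun i _ => measurable_one.indicator (hmeasE i))]
      exact (Finset.sum_congr rfl (fun i _ => (lintegral_indicator_one (hmeasE i)).symm))
    have hptw : ∀ ω, ∑ i ∈ T, (V ⁻¹' bad i).indicator 1 ω
        ≤ ENNReal.ofReal α * ∑ i ∈ T, ({ω | (Z i ω).2 = y}).indicator 1 ω := by
      intro ω
      have h1 : ∑ i ∈ T, (V ⁻¹' bad i).indicator (1 : Ω → ℝ≥0∞) ω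
          = ((T.filter (fun i => V ω ∈ bad i)).card : ℝ≥0∞) := by
        simp only [Set.indicator_apply, Pi.one_apply, Set.mem_preimage]
        rw [Finset.sum_boole]
      have h2 : ∑ i ∈ T, ({ω | (Z i ω).2 = y}).indicator (1 : Ω → ℝ≥0∞) ω
          = ((T.filter (fun i => (Z i ω).2 = y)).card : ℝ≥0∞) := by
        simp only [Set.indicator_apply, Pi.one_apply, Set.mem_setOf_eq]
        rw [Finset.sum_boole]
      rw [h1, h2]
      calc ((T.filter (fun i => V ω ∈ bad i)).card : ℝ≥0∞)
          = ENNReal.ofReal ((T.filter (fun i => V ω ∈ bad i)).card : ℝ) :=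
            (ENNReal.ofReal_natCast _).symm
        _ ≤ ENNReal.ofReal (α * ((T.filter (fun i => (Z i ω).2 = y)).card : ℝ)) :=
            ENNReal.ofReal_le_ofReal (hpoint ω)
        _ = ENNReal.ofReal α
            * ENNReal.ofReal ((T.filter (fun i => (Z i ω).2 = y)).card : ℝ) :=
            ENNReal.ofReal_mul hα0.le
        _ = ENNReal.ofReal α * ((T.filter (fun i => (Z i ω).2 = y)).card : ℝ≥0∞) := by
            rw [ENNReal.ofReal_natCast]
    have rhs_eq : (∫⁻ ω, ENNReal.ofReal α
          * ∑ i ∈ T, ({ω | (Z i ω).2 = y}).indicator 1 ω ∂P)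
        = ENNReal.ofReal α * ∑ i ∈ T, P {ω | (Z i ω).2 = y} := by
      rw [lintegral_const_mul _ (Finset.measurable_sum _
        (fun i _ => measurable_one.indicator (hmeasBi i)))]
      congr 1
      rw [lintegral_finset_sum _ (fun i _ => measurable_one.indicator (hmeasBi i))]
      exact (Finset.sum_congr rfl (fun i _ => lintegral_indicator_one (hmeasBi i)))
    calc (T.card : ℝ≥0∞) * P (V ⁻¹' bad N)
        = ∑ i ∈ T, P (V ⁻¹' bad i) := by
          rw [Finset.sum_congr rfl (fun i hi => hE_eq i hi), Finset.sum_const,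
            nsmul_eq_mul]
      _ = ∫⁻ ω, ∑ i ∈ T, (V ⁻¹' bad i).indicator 1 ω ∂P := lhs_eq
      _ ≤ ∫⁻ ω, ENNReal.ofReal α
            * ∑ i ∈ T, ({ω | (Z i ω).2 = y}).indicator 1 ω ∂P := lintegral_mono hptw
      _ = ENNReal.ofReal α * ∑ i ∈ T, P {ω | (Z i ω).2 = y} := rhs_eq
      _ = ENNReal.ofReal α * ((T.card : ℝ≥0∞) * P B) := by
          rw [Finset.sum_congr rfl (fun i hi => hB_eq i hi), Finset.sum_const,
            nsmul_eq_mul]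
  have hEbound : P (V ⁻¹' bad N) ≤ ENNReal.ofReal α * P B := by
    have hc0 : (T.card : ℝ≥0∞) ≠ 0 := by
      simp [Finset.card_eq_zero, Finset.nonempty_iff_ne_empty.1 ⟨N, hNT⟩]
    have hcT : (T.card : ℝ≥0∞) ≠ ⊤ := ENNReal.natCast_ne_top _
    rw [← ENNReal.mul_le_mul_iff_right hc0 hcT]
    calc (T.card : ℝ≥0∞) * P (V ⁻¹' bad N)
        ≤ ENNReal.ofReal α * ((T.card : ℝ≥0∞) * P B) := hsum
      _ = (T.card : ℝ≥0∞) * (ENNReal.ofReal α * P B) := by ring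
  -- assembly
  have hsplit : P B ≤ ENNReal.ofReal α * P B + P (B ∩ {ω | α < p y ω}) := by
    have hcover : B ⊆ (V ⁻¹' bad N) ∪ (B ∩ {ω | α < p y ω}) := by
      intro ω hω
      rcases le_or_gt (p y ω) α with h | h
      · refine Or.inl ?_
        rw [hEchar]
        exact ⟨by rw [hB] at hω; exact hω, h⟩
      · exact Or.inr ⟨hω, h⟩
    calc P B ≤ P ((V ⁻¹' bad N) ∪ (B ∩ {ω | α < p y ω})) := measure_mono hcover
      _ ≤ P (V ⁻¹' bad N) + P (B ∩ {ω | α < p y ω}) := measure_union_le _ _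
      _ ≤ ENNReal.ofReal α * P B + P (B ∩ {ω | α < p y ω}) := add_le_add_left hEbound _
  have h1 : ENNReal.ofReal (1 - α) * P B ≤ P (B ∩ {ω | α < p y ω}) := by
    have hfin : ENNReal.ofReal α * P B ≠ ⊤ :=
      ENNReal.mul_ne_top ENNReal.ofReal_ne_top (measure_ne_top P B)
    rw [← ENNReal.add_le_add_iff_right hfin]
    calc ENNReal.ofReal (1 - α) * P B + ENNReal.ofReal α * P B
        = (ENNReal.ofReal (1 - α) + ENNReal.ofReal α) * P B := (add_mul _ _ _).symm
      _ = P B := by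
          rw [← ENNReal.ofReal_add (by linarith) hα0.le]
          norm_num
      _ ≤ ENNReal.ofReal α * P B + P (B ∩ {ω | α < p y ω}) := hsplit
      _ = P (B ∩ {ω | α < p y ω}) + ENNReal.ofReal α * P B := add_comm _ _
  have hsubset : B ∩ {ω | α < p y ω} ⊆ B ∩ {ω | ∃ h : (A ω).Nonempty,
      (Z N ω).2 ∈ Finset.Icc ((A ω).min' h) ((A ω).max' h)} := by
    rintro ω ⟨hωB, hωp⟩
    have hωB' : (Z N ω).2 = y := by rw [hB] at hωB; exact hωB
    have hyA : y ∈ A ω := by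
      rw [hA]
      exact Finset.mem_filter.2 ⟨Finset.mem_univ y, hωp⟩
    have hne : (A ω).Nonempty := ⟨y, hyA⟩
    refine ⟨hωB, hne, ?_⟩
    rw [hωB']
    exact Finset.mem_Icc.2 ⟨Finset.min'_le _ y hyA, Finset.le_max' _ y hyA⟩
  have h2 : ENNReal.ofReal (1 - α) * P B ≤ P (B ∩ {ω | ∃ h : (A ω).Nonempty,
      (Z N ω).2 ∈ Finset.Icc ((A ω).min' h) ((A ω).max' h)}) :=
    h1.trans (measure_mono hsubset)
  rw [ProbabilityTheory.cond_apply hBmeas]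
  calc ENNReal.ofReal (1 - α)
      = ENNReal.ofReal (1 - α) * ((P B)⁻¹ * P B) := by
        rw [ENNReal.inv_mul_cancel hpos.ne' (measure_ne_top P B), mul_one]
    _ = (P B)⁻¹ * (ENNReal.ofReal (1 - α) * P B) := by ring
    _ ≤ _ := mul_le_mul_right h2 _
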